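/- Let F be a field and let Φ : Mat_{n,p}(F) → F^n be an additive range-compatible map (i.e. Φ(M) ∈ im M for all M). If n ≥ 2, then Φ is F-linear. -/

import Mathlib

/-- An additive map `f : F^n → F^n` with `f x ∈ span {x}` for all `x`, where `n ≥ 2`,
is multiplication by a fixed scalar. -/
lemma loc_aux {F : Type*} [Field F] {n : ℕ} (hn : 2 ≤ n)
    (f : (Fin n → F) → (Fin n → F))
    (hadd : ∀ x y, f (x + y) = f x + f y)
    (hs : ∀ x, ∃ c : F, f x = c • x) :
    ∃ a : F, ∀ x, f x = a • x := by
  have hf0 : f 0 = 0 := by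
    have h := hadd 0 0
    rw [add_zero] at h
    have h2 : f 0 + 0 = f 0 + f 0 := by rw [add_zero]; exact h
    exact (add_left_cancel h2).symm
  set e : Fin n → (Fin n → F) := fun i => Pi.single i 1 with he_def
  have he : ∀ i k, e i k = if k = i then 1 else 0 := by
    intro i k; simp [he_def, Pi.single_apply]
  set A : Fin n → F := fun i => f (e i) i with hA_def
  have hei : ∀ i, f (e i) = A i • e i := by
    intro i
    obtain ⟨c, hc⟩ := hs (e i)
    have hAi : A i = c := by
      simp [hA_def, hc, Pi.smul_apply, he]
    rw [hAi, hc]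
  have hpair : ∀ i j : Fin n, i ≠ j → A i = A j := by
    intro i j hij
    obtain ⟨d, hd⟩ := hs (e i + e j)
    have h1 : f (e i + e j) = A i • e i + A j • e j := by
      rw [hadd, hei i, hei j]
    have hdi : d = A i := by
      have := congrFun hd i
      have h2 := congrFun h1 i
      rw [this] at h2
      simp [Pi.add_apply, Pi.smul_apply, he, hij, (Ne.symm hij)] at h2
      exact h2
    have hdj : d = A j := by
      have := congrFun hd j
      have h2 := congrFun h1 j
      rw [this] at h2
      simp [Pi.add_apply, Pi.smul_apply, he, hij, (Ne.symm hij)] at h2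
      exact h2
    rw [← hdi, ← hdj]
  have i0 : Fin n := ⟨0, by omega⟩
  set a : F := A i0 with ha_def
  have hAall : ∀ i, A i = a := by
    intro i
    by_cases h : i = i0
    · rw [h]
    · exact hpair i i0 h
  refine ⟨a, fun x => ?_⟩
  by_cases hx : x = 0
  · simp [hx, hf0]
  · obtain ⟨j, hj⟩ := Function.ne_iff.mp hx
    simp only [Pi.zero_apply] at hj
    have i1 : Fin n := ⟨1, by omega⟩
    set i : Fin n := if j = ⟨0, by omega⟩ then ⟨1, by omega⟩ else ⟨0, by omega⟩ with hi_def
    have hij : i ≠ j := by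
      rw [hi_def]
      split
      · rename_i h; rw [h]; intro hcon; exact absurd (Fin.val_eq_val _ _ |>.mpr hcon) (by simp)
      · rename_i h; exact fun hcon => h (hcon ▸ rfl)
    obtain ⟨c, hc⟩ := hs x
    obtain ⟨d, hd⟩ := hs (x + e i)
    have h1 : f (x + e i) = c • x + A i • e i := by rw [hadd, hc, hei i]
    have hdc : d = c := by
      have h2 := congrFun hd j
      have h3 := congrFun h1 j
      rw [h2] at h3
      have heij : e i j = 0 := by simp [he, (Ne.symm hij)]
      simp [Pi.add_apply, Pi.smul_apply, heij] at h3
      exact h3.resolve_right hj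
    have hca : c = A i := by
      have h2 := congrFun hd i
      have h3 := congrFun h1 i
      rw [h2] at h3
      have heii : e i i = 1 := by simp [he]
      simp [Pi.add_apply, Pi.smul_apply, heii, hdc] at h3
      linear_combination h3
    rw [hc, hca, hAall i]

/-- An additive range-compatible map `Φ : Mat_{n,p}(F) → F^n` with `n ≥ 2`
is automatically `F`-linear. -/
theorem additive_range_compatible_is_linear (F : Type*) [Field F] (n p : ℕ)
    (hn : 2 ≤ n)
    (Φ : Matrix (Fin n) (Fin p) F → (Fin n → F))
    (hadd : ∀ M N, Φ (M + N) = Φ M + Φ N)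
    (hrc : ∀ M, Φ M ∈ LinearMap.range M.mulVecLin) :
    ∀ (c : F) (M : Matrix (Fin n) (Fin p) F), Φ (c • M) = c • Φ M := by
  classical
  have h0 : Φ 0 = 0 := by
    have h := hadd 0 0
    rw [add_zero] at h
    have h2 : Φ 0 + 0 = Φ 0 + Φ 0 := by rw [add_zero]; exact h
    exact (add_left_cancel h2).symm
  -- column matrices
  set col : (Fin n → F) → Fin p → Matrix (Fin n) (Fin p) F :=
    fun x j => Matrix.of fun i k => if k = j then x i else 0 with hcol_def
  have hcol_add : ∀ (x y : Fin n → F) (j : Fin p),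
      col (x + y) j = col x j + col y j := by
    intro x y j
    ext i k
    simp only [hcol_def, Matrix.of_apply, Matrix.add_apply, Pi.add_apply]
    split <;> simp
  -- the column maps are span-compatible
  have hspan : ∀ (j : Fin p) (x : Fin n → F), ∃ c : F, Φ (col x j) = c • x := by
    intro j x
    obtain ⟨v, hv⟩ := hrc (col x j)
    refine ⟨v j, ?_⟩
    rw [← hv]
    funext i
    simp only [Matrix.mulVecLin_apply, Matrix.mulVec, dotProduct, hcol_def,
      Matrix.of_apply, Pi.smul_apply, smul_eq_mul]
    rw [Finset.sum_congr rfl (fun k _ => by rw [ite_mul, zero_mul])]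
    rw [Finset.sum_ite_eq' Finset.univ j (fun k => x i * v k)]
    simp [mul_comm]
  -- homogeneity of the column maps
  have hhomog : ∀ (j : Fin p) (t : F) (x : Fin n → F),
      Φ (col (t • x) j) = t • Φ (col x j) := by
    intro j t x
    obtain ⟨a, ha⟩ := loc_aux hn (fun x => Φ (col x j))
      (fun x y => by
        show Φ (col (x + y) j) = Φ (col x j) + Φ (col y j)
        rw [hcol_add, hadd]) (hspan j)
    rw [ha, ha, smul_comm]
  -- sum of Φ over finite sums
  have hsum : ∀ (s : Finset (Fin p)) (g : Fin p → Matrix (Fin n) (Fin p) F),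
      Φ (∑ j ∈ s, g j) = ∑ j ∈ s, Φ (g j) := by
    intro s g
    induction s using Finset.induction with
    | empty => simp [h0]
    | insert a s hns ih =>
      rw [Finset.sum_insert hns, hadd, ih, Finset.sum_insert hns]
  -- decomposition into columns
  have hdecomp : ∀ (M : Matrix (Fin n) (Fin p) F),
      M = ∑ j, col (fun i => M i j) j := by
    intro M
    ext i k
    rw [Matrix.sum_apply]
    simp only [hcol_def, Matrix.of_apply]
    rw [Finset.sum_ite_eq Finset.univ k (fun j => M i j)]
    simp
  intro c M
  have key : c • M = ∑ j, col (c • fun i => M i j) j := by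
    rw [hdecomp (c • M)]
    refine Finset.sum_congr rfl fun j _ => rfl
  rw [key, hsum]
  conv_rhs => rw [hdecomp M, hsum]
  rw [Finset.smul_sum]
  exact Finset.sum_congr rfl (fun j _ => hhomog j c _)
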